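/- Let q = 2^f with f ≥ 1, let U be the Sylow 2-subgroup of B₂(q) presented by X₁, X₂, X₃, X₄ ≅ (F_q,+) with [x₁(s), x₂(t)] = x₃(st)x₄(st²) and all other root elements commuting. Fix a₃, a₄ ∈ F_q×, and let λ be the linear character of Z = X₃X₄ with λ(x₃(t)) = φ(a₃t), λ(x₄(t)) = φ(a₄t), where φ(t) = exp(2πi·Tr(t)/2). Then {x₁(s) : λ([x₁(s), x₂(t)]) = 1 for all t ∈ F_q} = {1, x₁(a₄/a₃²)} and {x₂(t) : λ([x₁(s), x₂(t)]) = 1 for all s ∈ F_q} = {1, x₂(a₃/a₄)}. -/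

import Mathlib

open scoped commutatorElement

private lemma stmt12_zmod2 : ∀ c : ZMod 2, c ≠ 0 → c = 1 := by decide
private lemma stmt12_zmodadd : ∀ c : ZMod 2, c + c = 0 := by decide


/-- In the Sylow 2-subgroup `U` of `B₂(q)`, `q = 2^f`, with `λ` the linear
character of `Z = X₃X₄` given by `λ(x₃(t)) = φ(a₃t)`, `λ(x₄(t)) = φ(a₄t)` for fixed
`a₃, a₄ ∈ F_q×`, where `φ(t) = exp(2πi·Tr(t)/2)`, one has
`{x₁(s) : λ([x₁(s), x₂(t)]) = 1 ∀t} = {1, x₁(a₄/a₃²)}` and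
`{x₂(t) : λ([x₁(s), x₂(t)]) = 1 ∀s} = {1, x₂(a₃/a₄)}`. -/
theorem stmt12 (f : ℕ) (hf : 0 < f)
    (F : Type) [Field F] [Fintype F] [Algebra (ZMod 2) F] (hcard : Fintype.card F = 2 ^ f)
    (U : Type) [Group U] [Fintype U]
    (x₁ x₂ x₃ x₄ : F → U)
    (hx₁ : ∀ s t, x₁ (s + t) = x₁ s * x₁ t) (hx₁inj : Function.Injective x₁)
    (hx₂ : ∀ s t, x₂ (s + t) = x₂ s * x₂ t) (hx₂inj : Function.Injective x₂)
    (hx₃ : ∀ s t, x₃ (s + t) = x₃ s * x₃ t) (hx₃inj : Function.Injective x₃)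
    (hx₄ : ∀ s t, x₄ (s + t) = x₄ s * x₄ t) (hx₄inj : Function.Injective x₄)
    (hrel : ∀ s t, ⁅x₁ s, x₂ t⁆ = x₃ (s * t) * x₄ (s * t ^ 2))
    (hc13 : ∀ s t, x₁ s * x₃ t = x₃ t * x₁ s)
    (hc14 : ∀ s t, x₁ s * x₄ t = x₄ t * x₁ s)
    (hc23 : ∀ s t, x₂ s * x₃ t = x₃ t * x₂ s)
    (hc24 : ∀ s t, x₂ s * x₄ t = x₄ t * x₂ s)
    (hc34 : ∀ s t, x₃ s * x₄ t = x₄ t * x₃ s)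
    (a₃ a₄ : F) (ha₃ : a₃ ≠ 0) (ha₄ : a₄ ≠ 0)
    (φ : F → ℂ)
    (hφ : ∀ t : F, φ t =
      Complex.exp (2 * Real.pi * Complex.I * (((Algebra.trace (ZMod 2) F) t).val : ℂ) / 2))
    (lam : U → ℂ)
    (hlam : ∀ s t : F, lam (x₃ s * x₄ t) = φ (a₃ * s) * φ (a₄ * t)) :
    ({u : U | ∃ s : F, u = x₁ s ∧ ∀ t : F, lam ⁅x₁ s, x₂ t⁆ = 1}
        = {1, x₁ (a₄ / a₃ ^ 2)}) ∧
    ({u : U | ∃ t : F, u = x₂ t ∧ ∀ s : F, lam ⁅x₁ s, x₂ t⁆ = 1}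
        = {1, x₂ (a₃ / a₄)}) := by
  haveI : Fact (Nat.Prime 2) := ⟨Nat.prime_two⟩
  haveI : CharP F 2 := charP_of_injective_algebraMap (algebraMap (ZMod 2) F).injective 2
  haveI : PerfectRing F 2 := PerfectRing.ofFiniteOfIsReduced 2 F
  set Tr := Algebra.trace (ZMod 2) F with hTr
  -- trace of a square
  let e : F ≃ₐ[ZMod 2] F :=
    { frobeniusEquiv F 2 with
      commutes' := fun c => by
        show algebraMap (ZMod 2) F c ^ 2 = _; rw [← map_pow, ZMod.pow_card] }
  have tr_sq : ∀ x : F, Tr (x ^ 2) = Tr x := by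
    intro x
    have := Algebra.trace_eq_of_algEquiv e x
    simpa [e, frobeniusEquiv_apply, frobenius_def, hTr] using this
  have nondeg : ∀ b : F, (∀ t : F, Tr (b * t) = 0) → b = 0 := by
    intro b hb
    have htr := (traceForm_nondegenerate (ZMod 2) F).1 b
    simp_rw [Algebra.traceForm_apply] at htr
    exact htr (fun t => hb t)
  have zmod2 := stmt12_zmod2
  have zmodadd := stmt12_zmodadd
  -- value of φ
  have hφval : ∀ u : F, φ u = if Tr u = 0 then 1 else -1 := by
    intro u
    rw [hφ u]
    by_cases h : Tr u = 0
    · rw [if_pos h, h]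
      norm_num
    · rw [if_neg h]
      have hv : (((Tr u).val : ℕ) : ℂ) = 1 := by
        rw [zmod2 _ h]; norm_num [ZMod.val_one]
      rw [hv]
      have h2 : 2 * (Real.pi : ℂ) * Complex.I * 1 / 2 = Real.pi * Complex.I := by ring
      rw [h2, Complex.exp_pi_mul_I]
  have hprod : ∀ u v : F, (φ u * φ v = 1 ↔ Tr u = Tr v) := by
    intro u v
    rw [hφval, hφval]
    split_ifs with h1 h2 h2 <;> constructor <;> intro h <;> first | norm_num at h ⊢ | norm_num at h
    · rw [h1, h2]
    · rw [h1] at h; exact h2 h.symm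
    · rw [h2] at h; exact h1 h
    · rw [zmod2 _ h1, zmod2 _ h2]
  have key : ∀ s t : F, (lam ⁅x₁ s, x₂ t⁆ = 1 ↔ Tr (a₃ * (s * t)) = Tr (a₄ * (s * t ^ 2))) := by
    intro s t
    rw [hrel, hlam, hprod]
  -- `x₁ 0 = 1` etc.
  have hone1 : x₁ 0 = 1 := by
    have h := hx₁ 0 0
    rw [zero_add] at h
    exact (mul_left_cancel (a := x₁ 0) (by rw [← h, mul_one])).symm
  have hone2 : x₂ 0 = 1 := by
    have h := hx₂ 0 0
    rw [zero_add] at h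
    exact (mul_left_cancel (a := x₂ 0) (by rw [← h, mul_one])).symm
  constructor
  · ext u
    simp only [Set.mem_setOf_eq, Set.mem_insert_iff, Set.mem_singleton_iff]
    constructor
    · rintro ⟨s, rfl, hP⟩
      -- deduce s = 0 or s = a₄ / a₃ ^ 2
      set c := (frobeniusEquiv F 2).symm (a₄ * s) with hc
      have hc2 : c ^ 2 = a₄ * s := frobeniusEquiv_symm_pow_p F 2 (a₄ * s)
      have h1 : ∀ t : F, Tr ((a₃ * s + c) * t) = 0 := by
        intro t
        have h2 := (key s t).mp (hP t)
        have h3 : a₄ * (s * t ^ 2) = (c * t) ^ 2 := by rw [mul_pow, hc2]; ring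
        rw [h3, tr_sq] at h2
        have h4 : (a₃ * s + c) * t = a₃ * (s * t) + c * t := by ring
        rw [h4, map_add, h2]
        exact zmodadd _
      have h5 : a₃ * s + c = 0 := nondeg _ h1
      have h6 : c = -(a₃ * s) := eq_neg_of_add_eq_zero_right h5
      rcases eq_or_ne s 0 with rfl | hs
      · exact Or.inl hone1
      · have h7 : a₄ * s = (a₃ ^ 2 * s) * s := by rw [← hc2, h6]; ring
        have h8 : a₄ = a₃ ^ 2 * s := mul_right_cancel₀ hs h7
        have h9 : s = a₄ / a₃ ^ 2 := by
          rw [eq_div_iff (pow_ne_zero 2 ha₃), h8]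
          ring
        exact Or.inr (by rw [h9])
    · rintro (rfl | rfl)
      · refine ⟨0, hone1.symm, fun t => (key 0 t).mpr ?_⟩
        norm_num
      · refine ⟨a₄ / a₃ ^ 2, rfl, fun t => (key _ t).mpr ?_⟩
        have h3 : a₄ * (a₄ / a₃ ^ 2 * t ^ 2) = (a₃ * (a₄ / a₃ ^ 2 * t)) ^ 2 := by
          field_simp
        rw [h3, tr_sq]
  · ext u
    simp only [Set.mem_setOf_eq, Set.mem_insert_iff, Set.mem_singleton_iff]
    constructor
    · rintro ⟨t, rfl, hP⟩
      have h1 : ∀ s : F, Tr ((a₃ * t + a₄ * t ^ 2) * s) = 0 := by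
        intro s
        have h2 := (key s t).mp (hP s)
        have h4 : (a₃ * t + a₄ * t ^ 2) * s = a₃ * (s * t) + a₄ * (s * t ^ 2) := by ring
        rw [h4, map_add, h2]
        exact zmodadd _
      have h5 : a₃ * t + a₄ * t ^ 2 = 0 := nondeg _ h1
      rcases eq_or_ne t 0 with rfl | ht
      · exact Or.inl hone2
      · have h8 : t = a₃ / a₄ := by
          rw [eq_div_iff ha₄]
          have h9 : (a₃ + a₄ * t) * t = 0 := by linear_combination h5
          rcases mul_eq_zero.mp h9 with h | h
          · have h10 := eq_neg_of_add_eq_zero_right h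
            rw [CharTwo.neg_eq] at h10
            rw [mul_comm]
            exact h10
          · exact absurd h ht
        exact Or.inr (by rw [h8])
    · rintro (rfl | rfl)
      · refine ⟨0, hone2.symm, fun s => (key s 0).mpr ?_⟩
        norm_num
      · refine ⟨a₃ / a₄, rfl, fun s => (key s _).mpr ?_⟩
        have h3 : a₄ * (s * (a₃ / a₄) ^ 2) = a₃ * (s * (a₃ / a₄)) := by
          field_simp
        rw [h3]
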